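/- Let κ = 3. For every configuration X_0 : ℤ → ℤ/3ℤ, every integer x' ≥ 0, and every t ≥ 1, the walks S'_n and 𝒮'_n defined from X_0 with starting value x' satisfy: (S'_1 ≥ 0 and S'_2 ≥ 0 and … and S'_t ≥ 0) if and only if (𝒮'_1 ≥ 0 and 𝒮'_2 ≥ 0 and … and 𝒮'_t ≥ 0). -/

import Mathlib

noncomputable section

namespace FCA3

/-- The representative of an element of `ℤ/3ℤ` in `{-1, 0, 1}`. -/
def rep3 (a : ZMod 3) : ℤ := if a = 0 then 0 else if a = 1 then 1 else -1

/-- The triple of colors around site `x`. -/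
def vec (X : ℤ → ZMod 3) (x : ℤ) : ZMod 3 × ZMod 3 × ZMod 3 := (X (x - 1), X x, X (x + 1))

/-- The modified configuration `X₀'`, in which every flipping triple `120` or `021`
centered at `x` is replaced by color `1` at `x`. -/
def modify (X : ℤ → ZMod 3) : ℤ → ZMod 3 := fun x =>
  if vec X x = ((1 : ZMod 3), (2 : ZMod 3), (0 : ZMod 3)) ∨
     vec X x = ((0 : ZMod 3), (2 : ZMod 3), (1 : ZMod 3)) then 1 else X x

/-- The functional `g : (ℤ/3ℤ)³ → {-2,…,2}`, with `g(1,2,0) = -2`, `g(0,2,1) = 2`, and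
otherwise the representative of `k - j (mod 3)` in `{-1,0,1}`. -/
def g3 : ZMod 3 × ZMod 3 × ZMod 3 → ℤ := fun p =>
  if p = ((1 : ZMod 3), (2 : ZMod 3), (0 : ZMod 3)) then -2
  else if p = ((0 : ZMod 3), (2 : ZMod 3), (1 : ZMod 3)) then 2
  else rep3 (p.2.2 - p.2.1)

/-- The walk `S'_n = x' + Σ_{i=0}^{n-1} dX₀'(i, i+1)`. -/
def S' (X : ℤ → ZMod 3) (x' : ℤ) (n : ℕ) : ℤ :=
  x' + ∑ i ∈ Finset.range n, rep3 (modify X ((i : ℤ) + 1) - modify X (i : ℤ))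

/-- The starting value `𝒮₀ = x' + 1{X⃗₀(0) = (1,2,0)} - 2·1{X⃗₀(0) = (0,2,1)}`. -/
def S0 (X : ℤ → ZMod 3) (x' : ℤ) : ℤ :=
  x' + (if vec X 0 = ((1 : ZMod 3), (2 : ZMod 3), (0 : ZMod 3)) then 1 else 0) -
    (if vec X 0 = ((0 : ZMod 3), (2 : ZMod 3), (1 : ZMod 3)) then 2 else 0)

/-- The walk `𝒮_n = 𝒮₀ + Σ_{i=0}^{n-1} g(X⃗₀(i))`. -/
def Scal (X : ℤ → ZMod 3) (x' : ℤ) (n : ℕ) : ℤ :=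
  S0 X x' + ∑ i ∈ Finset.range n, g3 (vec X (i : ℤ))

/-- The adjusted walk `𝒮'_n = 𝒮_n + 1{𝒮_n = -1 and X⃗₀(n) = (0,2,1)}`. -/
def Scal' (X : ℤ → ZMod 3) (x' : ℤ) (n : ℕ) : ℤ :=
  Scal X x' n +
    (if Scal X x' n = -1 ∧ vec X (n : ℤ) = ((0 : ZMod 3), (2 : ZMod 3), (1 : ZMod 3))
     then 1 else 0)

/-- The local correction term relating `𝒮` and `S'`. -/
def C3 (p : ZMod 3 × ZMod 3 × ZMod 3) : ℤ :=
  (if p = ((1 : ZMod 3), (2 : ZMod 3), (0 : ZMod 3)) then 1 else 0) -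
    (if p = ((0 : ZMod 3), (2 : ZMod 3), (1 : ZMod 3)) then 2 else 0)

lemma step_id : ∀ a b c d : ZMod 3,
    g3 (a, b, c) =
      rep3 ((if (b, c, d) = ((1:ZMod 3), (2:ZMod 3), (0:ZMod 3)) ∨
              (b, c, d) = ((0:ZMod 3), (2:ZMod 3), (1:ZMod 3)) then 1 else c) -
            (if (a, b, c) = ((1:ZMod 3), (2:ZMod 3), (0:ZMod 3)) ∨
              (a, b, c) = ((0:ZMod 3), (2:ZMod 3), (1:ZMod 3)) then 1 else b)) +
        C3 (b, c, d) - C3 (a, b, c) := by decide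

lemma vec_eq (X : ℤ → ZMod 3) (z : ℤ) : vec X z = (X (z-1), X z, X (z+1)) := rfl

lemma modify_eq (X : ℤ → ZMod 3) (z : ℤ) :
    modify X z = if (X (z-1), X z, X (z+1)) = ((1:ZMod 3), (2:ZMod 3), (0:ZMod 3)) ∨
      (X (z-1), X z, X (z+1)) = ((0:ZMod 3), (2:ZMod 3), (1:ZMod 3)) then 1 else X z := rfl

lemma vec_succ (X : ℤ → ZMod 3) (z : ℤ) : vec X (z + 1) = (X z, X (z+1), X (z+2)) := by
  rw [vec_eq]
  norm_num
  ring_nf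

lemma scal_eq (X : ℤ → ZMod 3) (x' : ℤ) :
    ∀ n : ℕ, Scal X x' n = S' X x' n + C3 (vec X (n : ℤ)) := by
  intro n
  induction n with
  | zero =>
    simp only [Scal, S', S0, C3, Finset.range_zero, Finset.sum_empty, Nat.cast_zero, add_zero]
    ring
  | succ m ih =>
    have h1 : Scal X x' (m + 1) = Scal X x' m + g3 (vec X (m : ℤ)) := by
      unfold Scal
      rw [Finset.sum_range_succ]
      ring
    have h2 : S' X x' (m + 1) = S' X x' m +
        rep3 (modify X ((m : ℤ) + 1) - modify X (m : ℤ)) := by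
      simp [S', Finset.sum_range_succ]
      ring
    have key := step_id (X ((m : ℤ) - 1)) (X (m : ℤ)) (X ((m : ℤ) + 1)) (X ((m : ℤ) + 2))
    rw [h1, h2, ih]
    rw [vec_eq X (m : ℤ)]
    have hc : ((m + 1 : ℕ) : ℤ) = (m : ℤ) + 1 := by push_cast; ring
    rw [hc, vec_succ, modify_eq X (m : ℤ)]
    have hm1 : modify X ((m : ℤ) + 1) =
        (if (X (m:ℤ), X ((m:ℤ)+1), X ((m:ℤ)+2)) = ((1:ZMod 3), (2:ZMod 3), (0:ZMod 3)) ∨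
          (X (m:ℤ), X ((m:ℤ)+1), X ((m:ℤ)+2)) = ((0:ZMod 3), (2:ZMod 3), (1:ZMod 3))
         then 1 else X ((m:ℤ)+1)) := by
      rw [modify_eq]
      norm_num
      ring_nf
    rw [hm1]
    linarith [key]

/-- If the triple at `z` is `120`, the modified walk does not move from `z-1` to `z`. -/
lemma step120 (X : ℤ → ZMod 3) (z : ℤ)
    (h : vec X z = ((1:ZMod 3), (2:ZMod 3), (0:ZMod 3))) :
    rep3 (modify X z - modify X (z - 1)) = 0 := by
  obtain ⟨h1, h2, h3⟩ : X (z-1) = 1 ∧ X z = 2 ∧ X (z+1) = 0 := by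
    simpa [vec, Prod.ext_iff] using h
  have hz : modify X z = 1 := by
    rw [modify_eq, if_pos (Or.inl (by rw [h1, h2, h3]))]
  have hfalse : ¬ ((X (z-1-1), X (z-1), X (z-1+1)) = ((1:ZMod 3), (2:ZMod 3), (0:ZMod 3)) ∨
      (X (z-1-1), X (z-1), X (z-1+1)) = ((0:ZMod 3), (2:ZMod 3), (1:ZMod 3))) := by
    rintro (hc | hc) <;>
      · rw [Prod.mk.injEq, Prod.mk.injEq, h1] at hc
        exact absurd hc.2.1 (by decide)
  have hz1 : modify X (z - 1) = 1 := by
    rw [modify_eq, if_neg hfalse, h1]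
  rw [hz, hz1]
  decide

/-- If the triple at `z` is `021`, the modified walk moves up by `1` from `z-1` to `z`. -/
lemma step021 (X : ℤ → ZMod 3) (z : ℤ)
    (h : vec X z = ((0:ZMod 3), (2:ZMod 3), (1:ZMod 3))) :
    rep3 (modify X z - modify X (z - 1)) = 1 := by
  obtain ⟨h1, h2, h3⟩ : X (z-1) = 0 ∧ X z = 2 ∧ X (z+1) = 1 := by
    simpa [vec, Prod.ext_iff] using h
  have hz : modify X z = 1 := by
    rw [modify_eq, if_pos (Or.inr (by rw [h1, h2, h3]))]
  have hfalse : ¬ ((X (z-1-1), X (z-1), X (z-1+1)) = ((1:ZMod 3), (2:ZMod 3), (0:ZMod 3)) ∨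
      (X (z-1-1), X (z-1), X (z-1+1)) = ((0:ZMod 3), (2:ZMod 3), (1:ZMod 3))) := by
    rintro (hc | hc) <;>
      · rw [Prod.mk.injEq, Prod.mk.injEq, h1] at hc
        exact absurd hc.2.1 (by decide)
  have hz1 : modify X (z - 1) = 0 := by
    rw [modify_eq, if_neg hfalse, h1]
  rw [hz, hz1]
  decide

lemma S'_succ (X : ℤ → ZMod 3) (x' : ℤ) (m : ℕ) :
    S' X x' (m + 1) = S' X x' m + rep3 (modify X ((m : ℤ) + 1) - modify X (m : ℤ)) := by
  simp [S', Finset.sum_range_succ]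
  ring

end FCA3

open FCA3

/-- For κ = 3, starting value `x' ≥ 0` and `t ≥ 1`: the walk `S'`
stays nonnegative through the first `t` steps if and only if `𝒮'` does. -/
theorem walk_survival_equivalence (X : ℤ → ZMod 3) (x' : ℤ) (hx' : 0 ≤ x')
    (t : ℕ) (ht : 1 ≤ t) :
    (∀ n ∈ Finset.Icc 1 t, 0 ≤ S' X x' n) ↔ (∀ n ∈ Finset.Icc 1 t, 0 ≤ Scal' X x' n) := by
  have hS'0 : S' X x' 0 = x' := by simp [S']
  constructor
  · intro hS n hn
    rw [Finset.mem_Icc] at hn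
    obtain ⟨hn1, hnt⟩ := hn
    obtain ⟨m, rfl⟩ : ∃ m, n = m + 1 := ⟨n - 1, (Nat.succ_pred_eq_of_pos hn1).symm⟩
    have hSn : 0 ≤ S' X x' (m + 1) := hS _ (Finset.mem_Icc.2 ⟨hn1, hnt⟩)
    have hSm : 0 ≤ S' X x' m := by
      rcases Nat.eq_zero_or_pos m with hm | hm
      · rw [hm, hS'0]; exact hx'
      · exact hS _ (Finset.mem_Icc.2 ⟨hm, le_trans (Nat.le_succ m) hnt⟩)
    have heq := scal_eq X x' (m + 1)
    rw [Scal']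
    by_cases h120 : vec X ((m + 1 : ℕ) : ℤ) = ((1:ZMod 3), (2:ZMod 3), (0:ZMod 3))
    · have hC : C3 (vec X ((m + 1 : ℕ) : ℤ)) = 1 := by
        rw [h120]; decide
      rw [if_neg]
      · omega
      · rintro ⟨_, hc⟩
        rw [h120] at hc
        exact absurd hc (by decide)
    by_cases h021 : vec X ((m + 1 : ℕ) : ℤ) = ((0:ZMod 3), (2:ZMod 3), (1:ZMod 3))
    · have hC : C3 (vec X ((m + 1 : ℕ) : ℤ)) = -2 := by
        rw [h021]; decide
      -- S'_{m+1} = S'_m + 1 ≥ 1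
      have hstep : S' X x' (m + 1) = S' X x' m + 1 := by
        rw [S'_succ]
        have := step021 X ((m : ℤ) + 1) (by rw [show (m:ℤ)+1 = ((m+1:ℕ):ℤ) by push_cast; ring]; exact h021)
        rw [show (m:ℤ) + 1 - 1 = (m:ℤ) by ring] at this
        rw [this]
      by_cases hm1 : Scal X x' (m + 1) = -1
      · rw [if_pos ⟨hm1, h021⟩]; omega
      · rw [if_neg (fun hc => hm1 hc.1)]; omega
    · have hC : C3 (vec X ((m + 1 : ℕ) : ℤ)) = 0 := by
        rw [C3, if_neg h120, if_neg h021]; ring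
      rw [if_neg (fun hc => h021 hc.2)]
      omega
  · intro hSc
    have main : ∀ n : ℕ, 1 ≤ n → n ≤ t → 0 ≤ S' X x' n := by
      intro n
      induction n with
      | zero => omega
      | succ m ih =>
        intro _ hnt
        have hScn : 0 ≤ Scal' X x' (m + 1) :=
          hSc _ (Finset.mem_Icc.2 ⟨Nat.succ_le_succ (Nat.zero_le m), hnt⟩)
        have heq := scal_eq X x' (m + 1)
        rw [Scal'] at hScn
        by_cases h120 : vec X ((m + 1 : ℕ) : ℤ) = ((1:ZMod 3), (2:ZMod 3), (0:ZMod 3))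
        · -- S'_{m+1} = S'_m
          have hstep : S' X x' (m + 1) = S' X x' m := by
            rw [S'_succ]
            have := step120 X ((m : ℤ) + 1) (by rw [show (m:ℤ)+1 = ((m+1:ℕ):ℤ) by push_cast; ring]; exact h120)
            rw [show (m:ℤ) + 1 - 1 = (m:ℤ) by ring] at this
            rw [this, add_zero]
          rw [hstep]
          rcases Nat.eq_zero_or_pos m with hm | hm
          · rw [hm, hS'0]; exact hx'
          · exact ih hm (le_trans (Nat.le_succ m) hnt)
        by_cases h021 : vec X ((m + 1 : ℕ) : ℤ) = ((0:ZMod 3), (2:ZMod 3), (1:ZMod 3))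
        · have hC : C3 (vec X ((m + 1 : ℕ) : ℤ)) = -2 := by rw [h021]; decide
          by_cases hm1 : Scal X x' (m + 1) = -1
          · rw [if_pos ⟨hm1, h021⟩] at hScn; omega
          · rw [if_neg (fun hc => hm1 hc.1)] at hScn; omega
        · have hC : C3 (vec X ((m + 1 : ℕ) : ℤ)) = 0 := by
            rw [C3, if_neg h120, if_neg h021]; ring
          rw [if_neg (fun hc => h021 hc.2)] at hScn
          omega
    intro n hn
    rw [Finset.mem_Icc] at hn
    exact main n hn.1 hn.2
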